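/- Let λ₁,…,λ_k be pairwise distinct nonzero complex numbers with |λ_i| < 1. Define C_j = λ_j^{k-1} ∏_{ℓ≠j} (1-λ_ℓ²)/((λ_j-λ_ℓ)(1-λ_jλ_ℓ)). Then ∑_{j=1}^k C_j = B_0 = ∑_{m₁+⋯+m_k=0} ∏_i λ_i^{|m_i|}; in particular ∑_{j=1}^k C_j is the S = 0 value of the sum and hence a symmetric function of λ₁,…,λ_k. -/

import Mathlib

open Finset

lemma summable_geom_int {r : ℝ} (h0 : 0 ≤ r) (h1 : r < 1) :
    Summable (fun T : ℤ => r ^ T.natAbs) := by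
  apply Summable.of_nat_of_neg_add_one
  · simpa using summable_geometric_of_lt_one h0 h1
  · have e : (fun n : ℕ => r ^ (-((n:ℤ) + 1)).natAbs) = fun n : ℕ => r ^ (n+1) := by
      funext n
      have : (-((n:ℤ)+1)).natAbs = n+1 := by omega
      rw [this]
    rw [e]
    exact (summable_geometric_of_lt_one h0 h1).comp_injective Nat.succ_injective

lemma summable_norm_prod (k : ℕ) : ∀ (lam : Fin k → ℂ), (∀ i, ‖lam i‖ < 1) →
    Summable (fun m : Fin k → ℤ => ∏ i, ‖lam i‖ ^ (m i).natAbs) := by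
  induction k with
  | zero => intro lam _; exact summable_of_finite_support (Set.toFinite _)
  | succ k ih =>
    intro lam h
    have ih' := ih (fun i => lam (Fin.succAbove 0 i)) (fun i => h _)
    set F : ℤ → ℝ := fun T => ‖lam 0‖ ^ T.natAbs with hF
    set G : (Fin k → ℤ) → ℝ := fun m => ∏ i, ‖lam (Fin.succAbove 0 i)‖ ^ (m i).natAbs with hG
    have base : Summable (fun p : ℤ × (Fin k → ℤ) => F p.1 * G p.2) :=
      Summable.mul_of_nonneg (summable_geom_int (norm_nonneg _) (h 0)) ih'
        (fun T => pow_nonneg (norm_nonneg _) _)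
        (fun m => Finset.prod_nonneg fun i _ => pow_nonneg (norm_nonneg _) _)
    rw [← (Fin.insertNthEquiv (fun _ : Fin (k+1) => ℤ) 0).summable_iff]
    refine base.congr fun p => ?_
    simp only [Fin.insertNthEquiv_apply, Function.comp]
    rw [Fin.prod_univ_succAbove _ (0 : Fin (k+1))]
    simp [hF, hG, Fin.insertNth_apply_succAbove]

lemma summable_prod (k : ℕ) (lam : Fin k → ℂ) (h : ∀ i, ‖lam i‖ < 1) :
    Summable (fun m : Fin k → ℤ => ∏ i, lam i ^ (m i).natAbs) := by
  apply Summable.of_norm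
  refine (summable_norm_prod k lam h).congr fun m => ?_
  rw [norm_prod]
  exact Finset.prod_congr rfl fun i _ => (norm_pow _ _).symm

lemma norm_ab_lt {a b : ℂ} (ha : ‖a‖ < 1) (hb : ‖b‖ < 1) : ‖a * b‖ < 1 := by
  rw [norm_mul]
  calc ‖a‖ * ‖b‖ ≤ ‖a‖ * 1 := by
        exact mul_le_mul_of_nonneg_left hb.le (norm_nonneg _)
    _ = ‖a‖ := mul_one _
    _ < 1 := ha

lemma one_sub_ab_ne {a b : ℂ} (ha : ‖a‖ < 1) (hb : ‖b‖ < 1) : 1 - a * b ≠ 0 := by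
  have h := norm_ab_lt ha hb
  intro hc
  rw [sub_eq_zero] at hc
  rw [← hc] at h
  simp at h

set_option maxHeartbeats 1000000 in
lemma conv_sum (a b : ℂ) (ha : ‖a‖ < 1) (hb : ‖b‖ < 1) (hab : a ≠ b) (n : ℕ) :
    ∑' T : ℤ, a ^ T.natAbs * b ^ ((n : ℤ) - T).natAbs
      = b ^ n * (b * (1 - a^2) / ((b - a) * (1 - a*b)))
        + a ^ n * (a * (1 - b^2) / ((a - b) * (1 - a*b))) := by
  have hab1 : ‖a * b‖ < 1 := norm_ab_lt ha hb
  have h1ab : (1 : ℂ) - a * b ≠ 0 := one_sub_ab_ne ha hb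
  have hba : b - a ≠ 0 := sub_ne_zero.mpr (Ne.symm hab)
  have hgeo : ∑' t : ℕ, (a*b) ^ t = (1 - a*b)⁻¹ := tsum_geometric_of_norm_lt_one hab1
  have hgeos : Summable (fun t : ℕ => (a*b) ^ t) := summable_geometric_of_norm_lt_one hab1
  -- negative part
  have hnegf : (fun t : ℕ => a ^ ((-((t:ℤ) + 1)).natAbs) * b ^ ((n : ℤ) - (-((t:ℤ)+1))).natAbs)
      = fun t : ℕ => b ^ n * (a*b) * (a*b) ^ t := by
    funext t
    have h1 : ((-((t:ℤ) + 1)).natAbs) = t + 1 := by omega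
    have h2 : (((n : ℤ) - (-((t:ℤ)+1))).natAbs) = n + (t + 1) := by omega
    rw [h1, h2]
    ring
  have hneg_summ : Summable (fun t : ℕ => b ^ n * (a*b) * (a*b) ^ t) :=
    hgeos.mul_left _
  have hneg_sum : ∑' t : ℕ, b ^ n * (a*b) * (a*b) ^ t = b ^ n * (a*b) * (1 - a*b)⁻¹ := by
    rw [tsum_mul_left, hgeo]
  -- nonneg part
  have htailf : (fun t : ℕ => a ^ ((t + (n+1) : ℕ)) * b ^ ((n : ℤ) - (t + (n+1) : ℕ)).natAbs)
      = fun t : ℕ => a ^ n * (a*b) * (a*b) ^ t := by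
    funext t
    have h2 : (((n : ℤ) - (t + (n+1) : ℕ)).natAbs) = t + 1 := by
      push_cast; omega
    rw [h2]
    ring
  have hbd : ∀ t : ℕ, ‖a ^ t * b ^ ((n : ℤ) - t).natAbs‖ ≤ ‖a‖ ^ t := by
    intro t
    rw [norm_mul, norm_pow, norm_pow]
    calc ‖a‖ ^ t * ‖b‖ ^ ((n : ℤ) - t).natAbs ≤ ‖a‖ ^ t * 1 := by
          apply mul_le_mul_of_nonneg_left _ (pow_nonneg (norm_nonneg _) _)
          exact pow_le_one₀ (norm_nonneg _) hb.le
      _ = ‖a‖ ^ t := mul_one _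
  have hpos_summ : Summable (fun t : ℕ => a ^ t * b ^ ((n : ℤ) - t).natAbs) :=
    Summable.of_norm_bounded (summable_geometric_of_lt_one (norm_nonneg _) ha) hbd
  have hpos : ∑' t : ℕ, a ^ t * b ^ ((n : ℤ) - t).natAbs
      = (∑ t ∈ Finset.range (n+1), a ^ t * b ^ ((n : ℤ) - t).natAbs)
        + a ^ n * (a*b) * (1 - a*b)⁻¹ := by
    rw [← Summable.sum_add_tsum_nat_add (n+1) hpos_summ]
    congr 1
    rw [show (fun t : ℕ => a ^ (t + (n+1)) * b ^ ((n : ℤ) - (↑(t + (n+1)))).natAbs)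
        = fun t : ℕ => a ^ n * (a*b) * (a*b) ^ t from htailf]
    rw [tsum_mul_left, hgeo]
  have hfin : (∑ t ∈ Finset.range (n+1), a ^ t * b ^ ((n : ℤ) - t).natAbs)
      = (a ^ (n+1) - b ^ (n+1)) / (a - b) := by
    have : (∑ t ∈ Finset.range (n+1), a ^ t * b ^ ((n : ℤ) - t).natAbs)
        = ∑ t ∈ Finset.range (n+1), a ^ t * b ^ (n - t) := by
      apply Finset.sum_congr rfl
      intro t ht
      have ht' : t ≤ n := Nat.lt_succ_iff.mp (Finset.mem_range.mp ht)
      congr 2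
      omega
    rw [this]
    have hg := geom_sum₂_mul a b (n+1)
    simp only [Nat.add_sub_cancel] at hg
    field_simp [sub_ne_zero.mpr hab]
    linear_combination hg
  rw [tsum_of_nat_of_neg_add_one hpos_summ (by rw [hnegf]; exact hneg_summ)]
  rw [show (fun t : ℕ => a ^ ((t:ℤ)).natAbs * b ^ ((n : ℤ) - (t:ℤ)).natAbs)
      = fun t : ℕ => a ^ t * b ^ ((n : ℤ) - t).natAbs by funext t; simp]
  rw [hnegf, hpos, hfin, hneg_sum]
  have hab' : a - b ≠ 0 := sub_ne_zero.mpr hab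
  field_simp [hba, hab', h1ab]
  ring

lemma conv_int (a b : ℂ) (ha : ‖a‖ < 1) (hb : ‖b‖ < 1) (hab : a ≠ b) (n : ℤ) :
    ∑' T : ℤ, a ^ T.natAbs * b ^ (n - T).natAbs
      = b ^ n.natAbs * (b * (1 - a^2) / ((b - a) * (1 - a*b)))
        + a ^ n.natAbs * (a * (1 - b^2) / ((a - b) * (1 - a*b))) := by
  rcases le_or_gt 0 n with hn | hn
  · obtain ⟨m, rfl⟩ := Int.eq_ofNat_of_zero_le hn
    simpa using conv_sum a b ha hb hab m
  · have h1 : ∑' T : ℤ, a ^ T.natAbs * b ^ (n - T).natAbs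
        = ∑' T : ℤ, a ^ T.natAbs * b ^ ((-n : ℤ) - T).natAbs := by
      rw [← (Equiv.neg ℤ).tsum_eq (fun T => a ^ T.natAbs * b ^ (n - T).natAbs)]
      apply tsum_congr
      intro T
      have e1 : ((Equiv.neg ℤ) T).natAbs = T.natAbs := by
        simp [Int.natAbs_neg]
      have e2 : (n - (Equiv.neg ℤ) T).natAbs = ((-n : ℤ) - T).natAbs := by
        simp only [Equiv.neg_apply]
        omega
      rw [e1, e2]
    rw [h1]
    obtain ⟨m, hm⟩ := Int.eq_ofNat_of_zero_le (by omega : (0:ℤ) ≤ -n)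
    rw [hm]
    have : n.natAbs = m := by omega
    rw [this]
    simpa using conv_sum a b ha hb hab m

set_option maxHeartbeats 1000000

open Finset Polynomial

noncomputable def Cc {k : ℕ} (lam : Fin k → ℂ) (j : Fin k) : ℂ :=
  lam j ^ (k - 1) *
    ∏ l ∈ Finset.univ.erase j, (1 - lam l ^ 2) / ((lam j - lam l) * (1 - lam j * lam l))

noncomputable def gg {k : ℕ} (lam : Fin k → ℂ) (n : ℤ) : ℂ :=
  ∑' m : {f : Fin k → ℤ // ∑ i, f i = n}, ∏ i, lam i ^ ((m : Fin k → ℤ) i).natAbs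

lemma lin_indep {k : ℕ} (lam : Fin k → ℂ) (hdist : Function.Injective lam)
    (c : Fin k → ℂ) (h : ∀ n : ℕ, ∑ j, c j * lam j ^ n = 0) : ∀ j, c j = 0 := by
  intro j0
  have key : ∀ P : ℂ[X], ∑ j, c j * P.eval (lam j) = 0 := by
    intro P
    have : ∀ j, c j * P.eval (lam j)
        = ∑ n ∈ range (P.natDegree + 1), c j * (P.coeff n * lam j ^ n) := by
      intro j
      rw [eval_eq_sum_range, Finset.mul_sum]
    simp_rw [this]
    rw [Finset.sum_comm]
    have : ∀ n, ∑ j, c j * (P.coeff n * lam j ^ n) = P.coeff n * ∑ j, c j * lam j ^ n := by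
      intro n
      rw [Finset.mul_sum]
      exact Finset.sum_congr rfl fun j _ => by ring
    simp_rw [this, h, mul_zero, Finset.sum_const_zero]
  have hP := key (∏ l ∈ Finset.univ.erase j0, (X - C (lam l)))
  rw [Finset.sum_eq_single j0] at hP
  · have hne : Polynomial.eval (lam j0) (∏ l ∈ Finset.univ.erase j0, (X - C (lam l))) ≠ 0 := by
      rw [Polynomial.eval_prod]
      apply Finset.prod_ne_zero_iff.mpr
      intro l hl
      simp only [eval_sub, eval_X, eval_C, sub_ne_zero]
      exact fun hc => (Finset.mem_erase.mp hl).1 ((hdist hc).symm)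
    exact (mul_eq_zero.mp hP).resolve_right hne
  · intro j _ hj
    have : Polynomial.eval (lam j) (∏ l ∈ Finset.univ.erase j0, (X - C (lam l))) = 0 := by
      rw [Polynomial.eval_prod]
      apply Finset.prod_eq_zero (Finset.mem_erase.mpr ⟨hj, Finset.mem_univ j⟩)
      simp
    rw [this, mul_zero]
  · intro hj; exact absurd (Finset.mem_univ j0) hj

def sumEquiv {k : ℕ} (i : Fin (k+1)) (n : ℤ) :
    (Fin k → ℤ) ≃ {f : Fin (k+1) → ℤ // ∑ i', f i' = n} where
  toFun m := ⟨i.insertNth (n - ∑ j, m j) m, by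
    rw [Fin.sum_univ_succAbove _ i]
    simp [Fin.insertNth_apply_same, Fin.insertNth_apply_succAbove]⟩
  invFun f := i.removeNth f.1
  left_inv m := by simp [Fin.removeNth_insertNth]
  right_inv f := by
    ext1
    have hs : ∑ j, (i.removeNth f.1) j = n - f.1 i := by
      have := Fin.sum_univ_succAbove f.1 i
      rw [f.2] at this
      simp only [Fin.removeNth]
      omega
    simp only [hs]
    have : n - (n - f.1 i) = f.1 i := by ring
    rw [this]
    exact Fin.insertNth_self_removeNth _ _

lemma gg_decomp {k : ℕ} (lam : Fin (k+1) → ℂ) (hlam : ∀ i, ‖lam i‖ < 1) (i : Fin (k+1))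
    (n : ℤ) :
    gg lam n = ∑' T : ℤ, lam i ^ (n - T).natAbs * gg (fun j => lam (i.succAbove j)) T := by
  classical
  set lam' : Fin k → ℂ := fun j => lam (i.succAbove j) with hlam'
  set F : (Fin k → ℤ) → ℂ :=
    fun m => lam i ^ (n - ∑ j, m j).natAbs * ∏ j, lam' j ^ (m j).natAbs with hF
  have hFs : Summable F := by
    apply Summable.of_norm_bounded (summable_norm_prod k lam' (fun j => hlam _))
    intro m
    rw [hF]
    simp only [norm_mul, norm_prod, norm_pow]
    calc ‖lam i‖ ^ (n - ∑ j, m j).natAbs * ∏ j, ‖lam' j‖ ^ (m j).natAbs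
        ≤ 1 * ∏ j, ‖lam' j‖ ^ (m j).natAbs := by
          apply mul_le_mul_of_nonneg_right (pow_le_one₀ (norm_nonneg _) (hlam i).le)
          exact Finset.prod_nonneg fun j _ => pow_nonneg (norm_nonneg _) _
      _ = ∏ j, ‖lam' j‖ ^ (m j).natAbs := one_mul _
  have step1 : gg lam n = ∑' m : Fin k → ℤ, F m := by
    rw [gg, ← (sumEquiv i n).tsum_eq]
    apply tsum_congr
    intro m
    show (∏ i', lam i' ^ ((i.insertNth (n - ∑ j, m j) m : Fin (k+1) → ℤ) i').natAbs) = F m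
    rw [Fin.prod_univ_succAbove _ i, hF]
    simp [Fin.insertNth_apply_same, Fin.insertNth_apply_succAbove, hlam']
  rw [step1]
  have step2 : ∑' m : Fin k → ℤ, F m
      = ∑' T : ℤ, ∑' m : {m : Fin k → ℤ // ∑ j, m j = T}, F m.1 := by
    set e := Equiv.sigmaFiberEquiv (fun m : Fin k → ℤ => ∑ j, m j) with he
    have h1 : Summable (F ∘ e) := e.summable_iff.mpr hFs
    have h2 := Summable.tsum_sigma h1
    rw [← e.tsum_eq F]
    exact h2
  rw [step2]
  apply tsum_congr
  intro T
  have : ∀ m : {m : Fin k → ℤ // ∑ j, m j = T},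
      F m.1 = lam i ^ (n - T).natAbs * ∏ j, lam' j ^ (m.1 j).natAbs := by
    rintro ⟨m, hm⟩
    rw [hF]
    simp only
    rw [hm]
  rw [tsum_congr this, tsum_mul_left]
  rfl

lemma erase_succAbove {k : ℕ} (i : Fin (k+1)) (j : Fin k) :
    Finset.univ.erase (i.succAbove j)
      = insert i ((Finset.univ.erase j).image i.succAbove) := by
  ext l
  simp only [Finset.mem_erase, Finset.mem_univ, and_true, Finset.mem_insert, Finset.mem_image]
  constructor
  · intro hl
    rcases eq_or_ne l i with rfl | hli
    · exact Or.inl rfl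
    · obtain ⟨l', rfl⟩ := Fin.exists_succAbove_eq hli
      exact Or.inr ⟨l', fun hc => hl (by rw [hc]), rfl⟩
  · rintro (rfl | ⟨l', hl', rfl⟩)
    · exact (Fin.succAbove_ne _ _).symm
    · exact fun hc => hl' (Fin.succAbove_right_injective hc)

lemma Cc_succAbove {k : ℕ} (hk : 1 ≤ k) (lam : Fin (k+1) → ℂ) (i : Fin (k+1)) (j : Fin k) :
    Cc (fun j' => lam (i.succAbove j')) j
      * (lam (i.succAbove j) * (1 - lam i ^ 2)
          / ((lam (i.succAbove j) - lam i) * (1 - lam (i.succAbove j) * lam i)))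
      = Cc lam (i.succAbove j) := by
  set sj := i.succAbove j with hsj
  set h : Fin (k+1) → ℂ :=
    fun l => (1 - lam l ^ 2) / ((lam sj - lam l) * (1 - lam sj * lam l)) with hh
  have hiimg : i ∉ (Finset.univ.erase j).image i.succAbove := by
    simp only [Finset.mem_image]
    rintro ⟨l', _, hc⟩
    exact Fin.succAbove_ne i l' hc
  have hprod : ∏ l ∈ Finset.univ.erase sj, h l
      = h i * ∏ l' ∈ Finset.univ.erase j, h (i.succAbove l') := by
    rw [erase_succAbove i j, Finset.prod_insert hiimg,
      Finset.prod_image (fun a _ b _ hab => i.succAbove_right_injective hab)]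
  show (lam sj ^ (k - 1) * ∏ l ∈ Finset.univ.erase j,
      (1 - lam (i.succAbove l) ^ 2) /
        ((lam sj - lam (i.succAbove l)) * (1 - lam sj * lam (i.succAbove l))))
      * (lam sj * (1 - lam i ^ 2) / ((lam sj - lam i) * (1 - lam sj * lam i)))
      = lam sj ^ (k + 1 - 1) * ∏ l ∈ Finset.univ.erase sj, h l
  have hpow : lam sj ^ (k + 1 - 1) = lam sj ^ (k - 1) * lam sj := by
    rw [show k + 1 - 1 = (k - 1) + 1 by omega, pow_succ]
  rw [hprod, hpow]
  simp only [hh]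
  ring

lemma summable_conv (a b : ℂ) (ha : ‖a‖ < 1) (hb : ‖b‖ < 1) (n : ℤ) :
    Summable (fun T : ℤ => a ^ T.natAbs * b ^ (n - T).natAbs) := by
  apply Summable.of_norm_bounded (summable_geom_int (norm_nonneg a) ha)
  intro T
  rw [norm_mul, norm_pow, norm_pow]
  calc ‖a‖ ^ T.natAbs * ‖b‖ ^ (n - T).natAbs ≤ ‖a‖ ^ T.natAbs * 1 := by
        apply mul_le_mul_of_nonneg_left _ (pow_nonneg (norm_nonneg _) _)
        exact pow_le_one₀ (norm_nonneg _) hb.le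
    _ = ‖a‖ ^ T.natAbs := mul_one _

lemma gg_rep {k : ℕ} (hk : 1 ≤ k) (lam : Fin (k+1) → ℂ) (hlam : ∀ i, ‖lam i‖ < 1)
    (hdist : Function.Injective lam) (i : Fin (k+1))
    (ih : ∀ T : ℤ, gg (fun j => lam (i.succAbove j)) T
        = ∑ j, Cc (fun j' => lam (i.succAbove j')) j * lam (i.succAbove j) ^ T.natAbs)
    (n : ℤ) :
    gg lam n = (∑ j, Cc (fun j' => lam (i.succAbove j')) j *
          (lam i * (1 - lam (i.succAbove j) ^ 2) /
            ((lam i - lam (i.succAbove j)) * (1 - lam (i.succAbove j) * lam i))))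
        * lam i ^ n.natAbs
      + ∑ j, Cc lam (i.succAbove j) * lam (i.succAbove j) ^ n.natAbs := by
  classical
  set lam' : Fin k → ℂ := fun j => lam (i.succAbove j) with hlam'def
  have hlam'norm : ∀ j, ‖lam' j‖ < 1 := fun j => hlam _
  have hne' : ∀ j, lam' j ≠ lam i := fun j hc => Fin.succAbove_ne i j (hdist hc)
  rw [gg_decomp lam hlam i n]
  have e1 : ∀ T : ℤ, lam i ^ (n - T).natAbs * gg lam' T
      = ∑ j, Cc lam' j * (lam' j ^ T.natAbs * lam i ^ (n - T).natAbs) := by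
    intro T
    rw [ih T, Finset.mul_sum]
    exact Finset.sum_congr rfl fun j _ => by ring
  rw [tsum_congr e1]
  rw [Summable.tsum_finsetSum (fun j _ => ((summable_conv (lam' j) (lam i)
    (hlam'norm j) (hlam i) n).mul_left _))]
  have e2 : ∀ j, ∑' T : ℤ, Cc lam' j * (lam' j ^ T.natAbs * lam i ^ (n - T).natAbs)
      = Cc lam' j * ((lam i) ^ n.natAbs *
          (lam i * (1 - lam' j ^ 2) / ((lam i - lam' j) * (1 - lam' j * lam i)))
        + lam' j ^ n.natAbs *
          (lam' j * (1 - lam i ^ 2) / ((lam' j - lam i) * (1 - lam' j * lam i)))) := by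
    intro j
    rw [tsum_mul_left, conv_int (lam' j) (lam i) (hlam'norm j) (hlam i) (hne' j) n]
  rw [Finset.sum_congr rfl (fun j _ => e2 j)]
  have e3 : ∀ j, Cc lam' j * ((lam i) ^ n.natAbs *
          (lam i * (1 - lam' j ^ 2) / ((lam i - lam' j) * (1 - lam' j * lam i)))
        + lam' j ^ n.natAbs *
          (lam' j * (1 - lam i ^ 2) / ((lam' j - lam i) * (1 - lam' j * lam i))))
      = (Cc lam' j *
          (lam i * (1 - lam' j ^ 2) / ((lam i - lam' j) * (1 - lam' j * lam i))))
          * lam i ^ n.natAbs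
        + (Cc lam' j *
          (lam' j * (1 - lam i ^ 2) / ((lam' j - lam i) * (1 - lam' j * lam i))))
          * lam' j ^ n.natAbs := by
    intro j
    ring
  rw [Finset.sum_congr rfl (fun j _ => e3 j), Finset.sum_add_distrib,
    ← Finset.sum_mul]
  congr 1
  apply Finset.sum_congr rfl
  intro j _
  rw [Cc_succAbove hk lam i j]

lemma gg_eq (k : ℕ) : 1 ≤ k → ∀ (lam : Fin k → ℂ), (∀ i, ‖lam i‖ < 1) →
    Function.Injective lam → ∀ n : ℤ,
    gg lam n = ∑ j, Cc lam j * lam j ^ n.natAbs := by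
  induction k with
  | zero => omega
  | succ k ih =>
    intro _ lam hlam hdist n
    rcases Nat.eq_zero_or_pos k with rfl | hk
    · -- base case : Fin 1
      have hgg : gg lam n = lam 0 ^ n.natAbs := by
        rw [gg, tsum_eq_single (⟨fun _ => n, by simp⟩ : {f : Fin 1 → ℤ // ∑ i, f i = n})]
        · rw [Fin.prod_univ_one]
        · rintro ⟨b, hb2⟩ hb
          exfalso
          apply hb
          apply Subtype.ext
          funext i
          have hi : i = (0 : Fin 1) := Subsingleton.elim _ _
          rw [hi]
          simpa using hb2
      rw [hgg, Fin.sum_univ_one]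
      have hCc : Cc lam 0 = 1 := by
        rw [Cc]
        have he : (Finset.univ.erase (0 : Fin 1)) = ∅ := by
          apply Finset.eq_empty_of_forall_notMem
          intro x hx
          exact (Finset.mem_erase.mp hx).1 (Subsingleton.elim _ _)
        rw [he]
        simp
      rw [hCc, one_mul]
    · -- inductive step
      have h01 : (0 : Fin (k+1)) ≠ 1 := by
        have h1v : ((1 : Fin (k+1)) : ℕ) = 1 := by
          rw [Fin.val_one']
          exact Nat.mod_eq_of_lt (by omega)
        intro hc
        have h := congrArg Fin.val hc
        rw [Fin.val_zero, h1v] at h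
        exact absurd h (by omega)
      set A : Fin (k+1) → Fin (k+1) → ℂ := fun i j' => if j' = i then
          (∑ j, Cc (fun j'' => lam (i.succAbove j'')) j *
            (lam i * (1 - lam (i.succAbove j) ^ 2) /
              ((lam i - lam (i.succAbove j)) * (1 - lam (i.succAbove j) * lam i))))
          else Cc lam j' with hA
      have hrep : ∀ (i : Fin (k+1)) (m : ℤ), gg lam m
          = ∑ j' : Fin (k+1), A i j' * lam j' ^ m.natAbs := by
        intro i m
        have hdist' : Function.Injective (fun j => lam (i.succAbove j)) :=
          fun a b hab => Fin.succAbove_right_injective (hdist hab)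
        have ihi := ih hk (fun j => lam (i.succAbove j)) (fun j => hlam _) hdist'
        rw [gg_rep hk lam hlam hdist i ihi m]
        rw [Fin.sum_univ_succAbove (fun j' => A i j' * lam j' ^ m.natAbs) i]
        simp only [hA]
        simp only [if_true]
        congr 1
        apply Finset.sum_congr rfl
        intro j _
        rw [if_neg (Fin.succAbove_ne i j)]
      have hAB : ∀ j', A 0 j' = A 1 j' := by
        have hz : ∀ m : ℕ, ∑ j', (A 0 j' - A 1 j') * lam j' ^ m = 0 := by
          intro m
          have h0 := hrep 0 (m : ℤ)
          have h1 := hrep 1 (m : ℤ)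
          simp only [Int.natAbs_natCast] at h0 h1
          have : ∀ j' : Fin (k+1), (A 0 j' - A 1 j') * lam j' ^ m
              = A 0 j' * lam j' ^ m - A 1 j' * lam j' ^ m := fun j' => sub_mul _ _ _
          rw [Finset.sum_congr rfl (fun j' _ => this j'), Finset.sum_sub_distrib,
            ← h0, ← h1, sub_self]
        intro j'
        have := lin_indep lam hdist (fun j' => A 0 j' - A 1 j') hz j'
        exact sub_eq_zero.mp this
      have hA0 : ∀ j', A 0 j' = Cc lam j' := by
        intro j'
        rcases eq_or_ne j' 0 with rfl | hj'
        · rw [hAB 0]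
          simp only [hA]
          rw [if_neg h01]
        · simp only [hA]
          rw [if_neg hj']
      rw [hrep 0 n]
      exact Finset.sum_congr rfl fun j' _ => by rw [hA0 j']

theorem stmt15 (k : ℕ) (hk : 1 ≤ k) (lam : Fin k → ℂ)
    (hlam : ∀ i, ‖lam i‖ < 1) (hne : ∀ i, lam i ≠ 0)
    (hdist : Function.Injective lam) :
    ∑ j, lam j ^ (k - 1) *
        ∏ l ∈ Finset.univ.erase j,
          (1 - lam l ^ 2) / ((lam j - lam l) * (1 - lam j * lam l))
      = ∑' m : {f : Fin k → ℤ // ∑ i, f i = 0},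
          ∏ i, lam i ^ ((m : Fin k → ℤ) i).natAbs := by
  have h := gg_eq k hk lam hlam hdist 0
  simp only [Int.natAbs_zero, pow_zero, mul_one] at h
  exact h.symm
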